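/- If the function u: A → B is injective, then the simplicial set C(μ,u) is 1-ordered. -/

import Mathlib

open CategoryTheory Simplicial Opposite Limits

set_option synthInstance.maxHeartbeats 1000000
set_option maxHeartbeats 1000000

namespace Paper

def IsDegenerate (X : SSet) {n : ℕ} (x : X.obj (op (SimplexCategory.mk n))) : Prop :=
  ∃ (k : ℕ) (f : SimplexCategory.mk n ⟶ SimplexCategory.mk k)
    (y : X.obj (op (SimplexCategory.mk k))),
      k < n ∧ Function.Surjective f.toOrderHom ∧ X.map f.op y = x

/-- The spine of `Δ[q]`: the union of the edges `{j, j+1}`, as a subcomplex of `Δ[q]`. -/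
def SpineSSet (q : ℕ) : SSet where
  obj X := { σ : X.unop ⟶ SimplexCategory.mk q //
    ∃ j : ℕ, ∀ i, j ≤ (σ.toOrderHom i : ℕ) ∧ (σ.toOrderHom i : ℕ) ≤ j + 1 }
  map f := TypeCat.ofHom fun σ => ⟨f.unop ≫ σ.1, by
    obtain ⟨j, hb⟩ := σ.2
    exact ⟨j, fun i => hb _⟩⟩
  map_id X := by
    refine ConcreteCategory.hom_ext _ _ fun σ => ?_
    exact Subtype.ext (Category.id_comp _)
  map_comp f g := by
    refine ConcreteCategory.hom_ext _ _ fun σ => ?_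
    exact Subtype.ext rfl

/-- The restriction of a `q`-simplex `x` of `K` along the spine inclusion
`Sp[q] ↪ Δ[q]`, as a map of simplicial sets `Sp[q] ⟶ K`. -/
def spineRestrict (K : SSet) (q : ℕ) (x : K.obj (op (SimplexCategory.mk q))) :
    SpineSSet q ⟶ K where
  app Y := TypeCat.ofHom fun σ => K.map σ.1.op x
  naturality Y Z f := by
    refine ConcreteCategory.hom_ext _ _ fun σ => ?_
    change K.map (f.unop ≫ σ.1).op x = K.map f (K.map σ.1.op x)
    rw [op_comp, Functor.map_comp_apply]
    rfl

/-- The edge relation on the vertices of a simplicial set: `x` is related to `y` if there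
is a `1`-simplex with initial vertex `x` and final vertex `y`. -/
def EdgeRel (K : SSet) (x y : K.obj (op (SimplexCategory.mk 0))) : Prop :=
  ∃ e : K.obj (op (SimplexCategory.mk 1)),
    K.map (SimplexCategory.δ 1).op e = x ∧ K.map (SimplexCategory.δ 0).op e = y

/-- A simplicial set `K` is `1`-ordered if (i) the reflexive-transitive closure of the
edge relation on its vertices is antisymmetric, and (ii) for every `q ≥ 1`, every
non-degenerate `q`-simplex of `K` restricts along the spine inclusion `Sp[q] ↪ Δ[q]` to a
monomorphism `Sp[q] ⟶ K`, and two non-degenerate `q`-simplices of `K` with equal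
restrictions to the spine are equal. -/
def Is1Ordered (K : SSet) : Prop :=
  (∀ x y : K.obj (op (SimplexCategory.mk 0)),
      Relation.ReflTransGen (EdgeRel K) x y → Relation.ReflTransGen (EdgeRel K) y x →
        x = y) ∧
  (∀ (q : ℕ), 0 < q → ∀ x : K.obj (op (SimplexCategory.mk q)),
      ¬ IsDegenerate K x → Mono (spineRestrict K q x)) ∧
  (∀ (q : ℕ), 0 < q → ∀ x y : K.obj (op (SimplexCategory.mk q)),
      ¬ IsDegenerate K x → ¬ IsDegenerate K y →
        spineRestrict K q x = spineRestrict K q y → x = y)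


/-- The vertex `k` of `Δ[q]`, as a map `Δ[0] ⟶ Δ[q]`. -/
def stdVert (q : ℕ) (k : Fin (q + 1)) : (Δ[0] : SSet) ⟶ (Δ[q] : SSet) :=
  SSet.stdSimplex.map (SimplexCategory.const _ _ k)

/-- The vertex `k` of the standard simplex `Δ[q]`, as a `0`-simplex. -/
def vertStd (q : ℕ) (k : Fin (q + 1)) : (Δ[q] : SSet).obj (op (SimplexCategory.mk 0)) :=
  SSet.stdSimplex.objEquiv.symm (SimplexCategory.const _ _ k)

section Cone

variable (A B : Type) (u : A → B) (l m : ℕ)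
  (μ : SimplexCategory.mk l ⟶ SimplexCategory.mk m)

/-- The map `∐_{a ∈ A} Δ[l] ⟶ ∐_{b ∈ B} Δ[m]` sending the copy of `Δ[l]` indexed by `a`
into the copy of `Δ[m]` indexed by `u a` via `μ`. -/
noncomputable def toLB : (∐ fun _ : A => (Δ[l] : SSet)) ⟶ (∐ fun _ : B => (Δ[m] : SSet)) :=
  Sigma.desc fun a => SSet.stdSimplex.map μ ≫ Sigma.ι (fun _ : B => (Δ[m] : SSet)) (u a)

/-- The map `∐_{a ∈ A} Δ[l] ⟶ ∐_{a ∈ A} Δ[l+1]` given on each summand by the face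
`d^{l+1}`. -/
noncomputable def toLA1 : (∐ fun _ : A => (Δ[l] : SSet)) ⟶ (∐ fun _ : A => (Δ[l+1] : SSet)) :=
  Sigma.desc fun a =>
    SSet.stdSimplex.map (SimplexCategory.δ (Fin.last (l + 1))) ≫
      Sigma.ι (fun _ : A => (Δ[l+1] : SSet)) a

/-- The amalgam `(∐_{b ∈ B} Δ[m]) ⊔_{∐_{a ∈ A} Δ[l]} (∐_{a ∈ A} Δ[l+1])`. -/
noncomputable def LL : SSet := pushout (toLB A B u l m μ) (toLA1 A l)

/-- The left leg of the defining span of `C(μ,u)`: it picks, in the `(i,b)`-summand, the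
vertex `i` of the copy of `Δ[m]` indexed by `b`, and in the `a`-summand the vertex `l+1`
of the copy of `Δ[l+1]` indexed by `a`. -/
noncomputable def midToL :
    (∐ fun _ : ((Fin (m + 1) × B) ⊕ A) => (Δ[0] : SSet)) ⟶ LL A B u l m μ :=
  Sigma.desc fun (x : (Fin (m + 1) × B) ⊕ A) =>
    match x with
    | Sum.inl (i, b) => stdVert m i ≫ Sigma.ι (fun _ : B => (Δ[m] : SSet)) b ≫
        pushout.inl (toLB A B u l m μ) (toLA1 A l)
    | Sum.inr a => stdVert (l + 1) (Fin.last (l + 1)) ≫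
        Sigma.ι (fun _ : A => (Δ[l+1] : SSet)) a ≫
        pushout.inr (toLB A B u l m μ) (toLA1 A l)

/-- The right leg of the defining span of `C(μ,u)`: it sends the `(i,b)`-summands to the
point indexed by `i` and the `a`-summands to the point indexed by `m+1`. -/
noncomputable def midToR :
    (∐ fun _ : ((Fin (m + 1) × B) ⊕ A) => (Δ[0] : SSet)) ⟶
      (∐ fun _ : Fin (m + 2) => (Δ[0] : SSet)) :=
  Sigma.desc fun (x : (Fin (m + 1) × B) ⊕ A) =>
    match x with
    | Sum.inl (i, _) => Sigma.ι (fun _ : Fin (m + 2) => (Δ[0] : SSet)) i.castSucc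
    | Sum.inr _ => Sigma.ι (fun _ : Fin (m + 2) => (Δ[0] : SSet)) (Fin.last (m + 1))

/-- The simplicial set `C(μ,u)`, defined as the pushout of the span with legs `midToL`
and `midToR`. -/
noncomputable def CC : SSet := pushout (midToL A B u l m μ) (midToR A B m)

/-- The vertices `0, 1, …, m+1` of `C(μ,u)`, i.e. the images of the points of
`∐_{0 ≤ i ≤ m+1} Δ[0]` under the canonical map to the pushout. -/
noncomputable def vertC (i : Fin (m + 2)) :
    (CC A B u l m μ).obj (op (SimplexCategory.mk 0)) :=
  (Sigma.ι (fun _ : Fin (m + 2) => (Δ[0] : SSet)) i ≫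
      pushout.inr (midToL A B u l m μ) (midToR A B m)).app
    (op (SimplexCategory.mk 0)) (vertStd 0 0)

/-- The map `μ + 1 : [l+1] ⟶ [m+1]` extending `μ` by sending `l+1` to `m+1`. -/
def muPlus : SimplexCategory.mk (l + 1) ⟶ SimplexCategory.mk (m + 1) :=
  SimplexCategory.Hom.mk
    { toFun := fun i =>
        if h : (i : ℕ) < l + 1 then (μ.toOrderHom ⟨(i : ℕ), h⟩).castSucc
        else Fin.last (m + 1)
      monotone' := by
        intro i j hij
        by_cases hi : (i : ℕ) < l + 1 <;> by_cases hj : (j : ℕ) < l + 1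
        · simp only [hi, hj, dif_pos]
          exact Fin.castSucc_le_castSucc_iff.mpr (μ.toOrderHom.monotone hij)
        · simp only [hi, hj, dif_pos, dif_neg, not_false_iff]
          exact Fin.le_last _
        · exfalso
          have h' : (i : ℕ) ≤ (j : ℕ) := hij
          omega
        · simp only [hi, hj, dif_neg, not_false_iff]
          exact le_refl _ }


section Aux

open SimplexCategory

/-- Any morphism to `⦋0⦌` is constant. -/
lemma toZero_eq {c : SimplexCategory} (f g : c ⟶ ⦋0⦌) : f = g := Subsingleton.elim f g

/-- characteristic map of the `b`-th copy of `Δ[m]` in `C(μ,u)`. -/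
noncomputable def charB (b : B) : (Δ[m] : SSet) ⟶ CC A B u l m μ :=
  Sigma.ι (fun _ : B => (Δ[m] : SSet)) b ≫ pushout.inl (toLB A B u l m μ) (toLA1 A l) ≫
    pushout.inl (midToL A B u l m μ) (midToR A B m)

/-- characteristic map of the `a`-th copy of `Δ[l+1]` in `C(μ,u)`. -/
noncomputable def charA (a : A) : (Δ[l+1] : SSet) ⟶ CC A B u l m μ :=
  Sigma.ι (fun _ : A => (Δ[l+1] : SSet)) a ≫ pushout.inr (toLB A B u l m μ) (toLA1 A l) ≫
    pushout.inl (midToL A B u l m μ) (midToR A B m)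

/-- characteristic map of the `i`-th point in `C(μ,u)`. -/
noncomputable def charP (i : Fin (m + 2)) : (Δ[0] : SSet) ⟶ CC A B u l m μ :=
  Sigma.ι (fun _ : Fin (m + 2) => (Δ[0] : SSet)) i ≫
    pushout.inr (midToL A B u l m μ) (midToR A B m)

/-- The simplex of `C(μ,u)` determined by `b` and a monotone map into `⦋m⦌`. -/
noncomputable def simB (b : B) {c : SimplexCategoryᵒᵖ} (α : c.unop ⟶ ⦋m⦌) :
    (CC A B u l m μ).obj c :=
  (charB A B u l m μ b).app c (SSet.stdSimplex.objEquiv.symm α)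

/-- The simplex of `C(μ,u)` determined by `a` and a monotone map into `⦋l+1⦌`. -/
noncomputable def simA (a : A) {c : SimplexCategoryᵒᵖ} (β : c.unop ⟶ ⦋l+1⦌) :
    (CC A B u l m μ).obj c :=
  (charA A B u l m μ a).app c (SSet.stdSimplex.objEquiv.symm β)

/-- The (totally degenerate) simplex of `C(μ,u)` at the vertex `i`. -/
noncomputable def ptC (i : Fin (m + 2)) (c : SimplexCategoryᵒᵖ) :
    (CC A B u l m μ).obj c :=
  (charP A B u l m μ i).app c
    (SSet.stdSimplex.objEquiv.symm (SimplexCategory.const c.unop ⦋0⦌ 0))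

lemma map_simB {c c' : SimplexCategoryᵒᵖ} (f : c ⟶ c') (b : B) (α : c.unop ⟶ ⦋m⦌) :
    (CC A B u l m μ).map f (simB A B u l m μ b α) = simB A B u l m μ b (f.unop ≫ α) :=
  (ConcreteCategory.congr_hom ((charB A B u l m μ b).naturality f)
    (SSet.stdSimplex.objEquiv.symm α)).symm

lemma map_simA {c c' : SimplexCategoryᵒᵖ} (f : c ⟶ c') (a : A) (β : c.unop ⟶ ⦋l+1⦌) :
    (CC A B u l m μ).map f (simA A B u l m μ a β) = simA A B u l m μ a (f.unop ≫ β) :=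
  (ConcreteCategory.congr_hom ((charA A B u l m μ a).naturality f)
    (SSet.stdSimplex.objEquiv.symm β)).symm

lemma map_ptC {c c' : SimplexCategoryᵒᵖ} (f : c ⟶ c') (i : Fin (m + 2)) :
    (CC A B u l m μ).map f (ptC A B u l m μ i c) = ptC A B u l m μ i c' := by
  exact (ConcreteCategory.congr_hom ((charP A B u l m μ i).naturality f)
    (SSet.stdSimplex.objEquiv.symm (SimplexCategory.const c.unop ⦋0⦌ 0))).symm

/-- The pushout relation along the `a`-th copy of `Δ[l]`. -/
lemma rel_BA (a : A) {c : SimplexCategoryᵒᵖ} (φ : c.unop ⟶ ⦋l⦌) :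
    simB A B u l m μ (u a) (φ ≫ μ) =
      simA A B u l m μ a (φ ≫ δ (Fin.last (l+1))) := by
  have h1 : Sigma.ι (fun _ : A => (Δ[l] : SSet)) a ≫ toLB A B u l m μ =
      SSet.stdSimplex.map μ ≫ Sigma.ι (fun _ : B => (Δ[m] : SSet)) (u a) := by
    simp [toLB]
  have h2 : Sigma.ι (fun _ : A => (Δ[l] : SSet)) a ≫ toLA1 A l =
      SSet.stdSimplex.map (δ (Fin.last (l+1))) ≫
        Sigma.ι (fun _ : A => (Δ[l+1] : SSet)) a := by
    simp [toLA1]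
  have key : SSet.stdSimplex.map μ ≫ charB A B u l m μ (u a) =
      SSet.stdSimplex.map (δ (Fin.last (l+1))) ≫ charA A B u l m μ a := by
    have hc := pushout.condition (f := toLB A B u l m μ) (g := toLA1 A l)
    have s1 := congrArg (· ≫ pushout.inl (toLB A B u l m μ) (toLA1 A l) ≫
      pushout.inl (midToL A B u l m μ) (midToR A B m)) h1
    have s2 := congrArg (Sigma.ι (fun _ : A => (Δ[l] : SSet)) a ≫ · ≫
      pushout.inl (midToL A B u l m μ) (midToR A B m)) hc
    have s3 := congrArg (· ≫ pushout.inr (toLB A B u l m μ) (toLA1 A l) ≫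
      pushout.inl (midToL A B u l m μ) (midToR A B m)) h2
    exact s1.symm.trans (s2.trans s3)
  have := ConcreteCategory.congr_hom (NatTrans.congr_app key c)
    (SSet.stdSimplex.objEquiv.symm φ)
  exact this

/-- The pushout relation for vertices of the `b`-th copy of `Δ[m]`. -/
lemma rel_vertB (b : B) (i : Fin (m + 1)) :
    stdVert m i ≫ charB A B u l m μ b = charP A B u l m μ i.castSucc := by
  have h1 : Sigma.ι (fun _ : ((Fin (m + 1) × B) ⊕ A) => (Δ[0] : SSet)) (Sum.inl (i, b)) ≫
      midToL A B u l m μ =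
      stdVert m i ≫ Sigma.ι (fun _ : B => (Δ[m] : SSet)) b ≫
        pushout.inl (toLB A B u l m μ) (toLA1 A l) := by
    simp [midToL]; rfl
  have h2 : Sigma.ι (fun _ : ((Fin (m + 1) × B) ⊕ A) => (Δ[0] : SSet)) (Sum.inl (i, b)) ≫
      midToR A B m =
      Sigma.ι (fun _ : Fin (m + 2) => (Δ[0] : SSet)) i.castSucc := by
    simp [midToR]
  exact (congrArg (· ≫ pushout.inl (midToL A B u l m μ) (midToR A B m)) h1).symm.trans
    ((congrArg (Sigma.ι (fun _ : ((Fin (m + 1) × B) ⊕ A) => (Δ[0] : SSet)) (Sum.inl (i, b)) ≫ ·)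
      pushout.condition).trans
      (congrArg (· ≫ pushout.inr (midToL A B u l m μ) (midToR A B m)) h2))

/-- The pushout relation for the cone vertex of the `a`-th copy of `Δ[l+1]`. -/
lemma rel_vertA (a : A) :
    stdVert (l + 1) (Fin.last (l + 1)) ≫ charA A B u l m μ a =
      charP A B u l m μ (Fin.last (m + 1)) := by
  have h1 : Sigma.ι (fun _ : ((Fin (m + 1) × B) ⊕ A) => (Δ[0] : SSet)) (Sum.inr a) ≫
      midToL A B u l m μ =
      stdVert (l + 1) (Fin.last (l + 1)) ≫ Sigma.ι (fun _ : A => (Δ[l+1] : SSet)) a ≫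
        pushout.inr (toLB A B u l m μ) (toLA1 A l) := by
    simp [midToL]; rfl
  have h2 : Sigma.ι (fun _ : ((Fin (m + 1) × B) ⊕ A) => (Δ[0] : SSet)) (Sum.inr a) ≫
      midToR A B m =
      Sigma.ι (fun _ : Fin (m + 2) => (Δ[0] : SSet)) (Fin.last (m + 1)) := by
    simp [midToR]
  exact (congrArg (· ≫ pushout.inl (midToL A B u l m μ) (midToR A B m)) h1).symm.trans
    ((congrArg (Sigma.ι (fun _ : ((Fin (m + 1) × B) ⊕ A) => (Δ[0] : SSet)) (Sum.inr a) ≫ ·)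
      pushout.condition).trans
      (congrArg (· ≫ pushout.inr (midToL A B u l m μ) (midToR A B m)) h2))

end Aux
section NormalForm

open SimplexCategory

/-- Non-constancy of a morphism into `⦋k⦌`. -/
def NC {c : SimplexCategory} {k : ℕ} (α : c ⟶ ⦋k⦌) : Prop :=
  ¬ ∀ i, α.toOrderHom i = α.toOrderHom 0

/-- A morphism into `⦋l+1⦌` hits the top vertex. -/
def TopHit {c : SimplexCategory} (β : c ⟶ ⦋l+1⦌) : Prop :=
  β.toOrderHom (Fin.last c.len) = Fin.last (l + 1)

lemma nc_comp {c c' : SimplexCategory} (g : c' ⟶ c) {k : ℕ} (α : c ⟶ ⦋k⦌)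
    (h : ¬ NC α) : ¬ NC (g ≫ α) := by
  simp only [NC, not_not] at h ⊢
  intro i
  show α.toOrderHom (g.toOrderHom i) = α.toOrderHom (g.toOrderHom 0)
  rw [h (g.toOrderHom i), h (g.toOrderHom 0)]

lemma nc_comp_zero {c c' : SimplexCategory} (g : c' ⟶ c) {k : ℕ} (α : c ⟶ ⦋k⦌)
    (h : ¬ NC α) : (g ≫ α).toOrderHom 0 = α.toOrderHom 0 := by
  simp only [NC, not_not] at h
  exact h (g.toOrderHom 0)

lemma ne_top_of_not_top {c : SimplexCategory} (β : c ⟶ ⦋l+1⦌) (h : ¬ TopHit l β)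
    (i : Fin (c.len + 1)) : β.toOrderHom i ≠ Fin.last (l + 1) := fun he =>
  h (le_antisymm (Fin.le_last _) (he ▸ β.toOrderHom.monotone (Fin.le_last i)))

lemma not_top_comp {c c' : SimplexCategory} (g : c' ⟶ c) (β : c ⟶ ⦋l+1⦌)
    (h : ¬ TopHit l β) : ¬ TopHit l (g ≫ β) :=
  ne_top_of_not_top l β h (g.toOrderHom (Fin.last c'.len))

/-- Truncation of a map avoiding the top vertex, composed with `μ`. -/
def trunc {c : SimplexCategory} (β : c ⟶ ⦋l+1⦌) (h : ¬ TopHit l β) : c ⟶ ⦋m⦌ :=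
  SimplexCategory.Hom.mk
    { toFun := fun i => μ.toOrderHom ((β.toOrderHom i).castPred (ne_top_of_not_top l β h i))
      monotone' := fun i j hij => μ.toOrderHom.monotone
        (Fin.castPred_le_castPred_iff.mpr (β.toOrderHom.monotone hij)) }

lemma trunc_comp {c c' : SimplexCategory} (g : c' ⟶ c) (β : c ⟶ ⦋l+1⦌)
    (h : ¬ TopHit l β) (h' : ¬ TopHit l (g ≫ β)) :
    g ≫ trunc l m μ β h = trunc l m μ (g ≫ β) h' := rfl

lemma nc_trunc (hμ : Function.Injective μ.toOrderHom) {c : SimplexCategory}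
    (β : c ⟶ ⦋l+1⦌) (ht : ¬ TopHit l β) (h : NC β) : NC (trunc l m μ β ht) := by
  intro hc
  apply h
  intro i
  have h2 := hμ (hc i)
  exact Fin.ext (by simpa using congrArg Fin.val h2)

/-- Normal forms for simplices of `C(μ,u)`. -/
@[reducible] def EObj (c : SimplexCategory) : Type :=
  Fin (m + 2) ⊕ ((B × {α : c ⟶ ⦋m⦌ // NC α}) ⊕ (A × {β : c ⟶ ⦋l+1⦌ // NC β ∧ TopHit l β}))

open Classical in
/-- Normalization of a `B`-labelled simplex. -/
noncomputable def normB (b : B) {c : SimplexCategory} (α : c ⟶ ⦋m⦌) : EObj A B l m c :=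
  if h : NC α then Sum.inr (Sum.inl (b, ⟨α, h⟩))
  else Sum.inl ((α.toOrderHom 0).castSucc)

open Classical in
/-- Normalization of an `A`-labelled simplex. -/
noncomputable def normA (hμ : Function.Injective μ.toOrderHom) (a : A)
    {c : SimplexCategory} (β : c ⟶ ⦋l+1⦌) : EObj A B l m c :=
  if h : NC β then
    if ht : TopHit l β then Sum.inr (Sum.inr (a, ⟨β, h, ht⟩))
    else Sum.inr (Sum.inl (u a, ⟨trunc l m μ β ht, nc_trunc l m μ hμ β ht h⟩))
  else if h0 : β.toOrderHom 0 = Fin.last (l+1) then Sum.inl (Fin.last (m+1))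
  else Sum.inl ((μ.toOrderHom ((β.toOrderHom 0).castPred h0)).castSucc)

/-- Restriction of normal forms. -/
noncomputable def Emap (hμ : Function.Injective μ.toOrderHom)
    {c c' : SimplexCategory} (g : c' ⟶ c) : EObj A B l m c → EObj A B l m c' := fun x => match x with
  | Sum.inl i => Sum.inl i
  | Sum.inr (Sum.inl p) => normB A B l m p.1 (g ≫ p.2.1)
  | Sum.inr (Sum.inr p) => normA A B u l m μ hμ p.1 (g ≫ p.2.1)

lemma Emap_normB (hμ : Function.Injective μ.toOrderHom)
    {c c' : SimplexCategory} (g : c' ⟶ c) (b : B) (α : c ⟶ ⦋m⦌) :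
    Emap A B u l m μ hμ g (normB A B l m b α) = normB A B l m b (g ≫ α) := by
  by_cases h : NC α
  · rw [normB, dif_pos h]
    rfl
  · rw [normB, dif_neg h]
    show Sum.inl _ = _
    rw [normB, dif_neg (nc_comp g α h)]
    exact congrArg Sum.inl (congrArg Fin.castSucc (nc_comp_zero g α h)).symm

lemma Emap_normA (hμ : Function.Injective μ.toOrderHom)
    {c c' : SimplexCategory} (g : c' ⟶ c) (a : A) (β : c ⟶ ⦋l+1⦌) :
    Emap A B u l m μ hμ g (normA A B u l m μ hμ a β) =
      normA A B u l m μ hμ a (g ≫ β) := by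
  by_cases h : NC β
  · by_cases ht : TopHit l β
    · rw [normA, dif_pos h, dif_pos ht]
      rfl
    · rw [normA, dif_pos h, dif_neg ht]
      show normB A B l m (u a) (g ≫ trunc l m μ β ht) = _
      have ht' : ¬ TopHit l (g ≫ β) := not_top_comp l g β ht
      rw [trunc_comp l m μ g β ht ht']
      by_cases h2 : NC (g ≫ β)
      · rw [normB, dif_pos (nc_trunc l m μ hμ (g ≫ β) ht' h2), normA, dif_pos h2, dif_neg ht']
      · have h3 : ¬ NC (trunc l m μ (g ≫ β) ht') := by
          simp only [NC, not_not] at h2 ⊢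
          intro i
          show μ.toOrderHom _ = μ.toOrderHom _
          congr 1
          exact Fin.ext (by simpa using congrArg Fin.val (h2 i))
        have h0 : (g ≫ β).toOrderHom 0 ≠ Fin.last (l+1) :=
          ne_top_of_not_top l (g ≫ β) ht' 0
        rw [normB, dif_neg h3, normA, dif_neg h2, dif_neg h0]
        rfl
  · have h2 : ¬ NC (g ≫ β) := nc_comp g β h
    have hz : (g ≫ β).toOrderHom 0 = β.toOrderHom 0 := nc_comp_zero g β h
    rw [normA, dif_neg h]
    by_cases h0 : β.toOrderHom 0 = Fin.last (l+1)
    · rw [dif_pos h0]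
      show Sum.inl _ = _
      rw [normA, dif_neg h2, dif_pos (hz.trans h0)]
    · rw [dif_neg h0]
      show Sum.inl _ = _
      rw [normA, dif_neg h2, dif_neg (fun hh => h0 (hz ▸ hh))]
      exact congrArg Sum.inl (congrArg Fin.castSucc (congrArg μ.toOrderHom
        (Fin.ext (by simpa using (congrArg Fin.val hz).symm))))

lemma Emap_id (hμ : Function.Injective μ.toOrderHom) {c : SimplexCategory}
    (x : EObj A B l m c) : Emap A B u l m μ hμ (𝟙 c) x = x := by
  match x with
  | Sum.inl i => rfl
  | Sum.inr (Sum.inl p) =>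
    show normB A B l m p.1 (𝟙 _ ≫ p.2.1) = _
    rw [Category.id_comp, normB, dif_pos p.2.2]
  | Sum.inr (Sum.inr p) =>
    show normA A B u l m μ hμ p.1 (𝟙 _ ≫ p.2.1) = _
    rw [Category.id_comp, normA, dif_pos p.2.2.1, dif_pos p.2.2.2]

lemma Emap_comp (hμ : Function.Injective μ.toOrderHom) {c c' c'' : SimplexCategory}
    (g₁ : c' ⟶ c) (g₂ : c'' ⟶ c') (x : EObj A B l m c) :
    Emap A B u l m μ hμ (g₂ ≫ g₁) x =
      Emap A B u l m μ hμ g₂ (Emap A B u l m μ hμ g₁ x) := by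
  match x with
  | Sum.inl i => rfl
  | Sum.inr (Sum.inl p) =>
    show normB A B l m p.1 ((g₂ ≫ g₁) ≫ p.2.1) =
      Emap A B u l m μ hμ g₂ (normB A B l m p.1 (g₁ ≫ p.2.1))
    rw [Emap_normB, Category.assoc]
  | Sum.inr (Sum.inr p) =>
    show normA A B u l m μ hμ p.1 ((g₂ ≫ g₁) ≫ p.2.1) =
      Emap A B u l m μ hμ g₂ (normA A B u l m μ hμ p.1 (g₁ ≫ p.2.1))
    rw [Emap_normA, Category.assoc]

/-- The explicit simplicial set of normal forms. -/
noncomputable def EF (hμ : Function.Injective μ.toOrderHom) : SSet.{v} where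
  obj c := ULift.{v} (EObj A B l m c.unop)
  map f := TypeCat.ofHom fun x => ULift.up (Emap A B u l m μ hμ f.unop x.down)
  map_id c := by
    refine ConcreteCategory.hom_ext _ _ fun x => ?_
    exact congrArg ULift.up (Emap_id A B u l m μ hμ x.down)
  map_comp f g := by
    refine ConcreteCategory.hom_ext _ _ fun x => ?_
    exact congrArg ULift.up (Emap_comp A B u l m μ hμ f.unop g.unop x.down)

lemma up_inj {α : Type} {x y : α} (h : ULift.up.{v} x = ULift.up.{v} y) : x = y :=
  congrArg ULift.down h

/-- Component map of `Φ` on the `b`-th copy of `Δ[m]`. -/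
noncomputable def mapB (hμ : Function.Injective μ.toOrderHom) (b : B) :
    (Δ[m] : SSet.{v}) ⟶ EF.{v} A B u l m μ hμ where
  app c := TypeCat.ofHom fun x => ULift.up (normB A B l m b (SSet.stdSimplex.objEquiv x))
  naturality c c' f := by
    refine ConcreteCategory.hom_ext _ _ fun x => ?_
    exact congrArg ULift.up
      (Emap_normB A B u l m μ hμ f.unop b (SSet.stdSimplex.objEquiv x)).symm

/-- Component map of `Φ` on the `a`-th copy of `Δ[l+1]`. -/
noncomputable def mapA (hμ : Function.Injective μ.toOrderHom) (a : A) :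
    (Δ[l+1] : SSet.{v}) ⟶ EF.{v} A B u l m μ hμ where
  app c := TypeCat.ofHom fun x => ULift.up (normA A B u l m μ hμ a (SSet.stdSimplex.objEquiv x))
  naturality c c' f := by
    refine ConcreteCategory.hom_ext _ _ fun x => ?_
    exact congrArg ULift.up
      (Emap_normA A B u l m μ hμ f.unop a (SSet.stdSimplex.objEquiv x)).symm

/-- Component map of `Φ` on the `i`-th point. -/
noncomputable def mapP (hμ : Function.Injective μ.toOrderHom) (i : Fin (m + 2)) :
    (Δ[0] : SSet.{v}) ⟶ EF.{v} A B u l m μ hμ where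
  app _ := TypeCat.ofHom fun _ => ULift.up (Sum.inl i)
  naturality _ _ _ := rfl

end NormalForm
section PhiSec

open SimplexCategory

lemma wBA (hμ : Function.Injective μ.toOrderHom) (a : A) :
    SSet.stdSimplex.map μ ≫ mapB A B u l m μ hμ (u a) =
      SSet.stdSimplex.map (δ (Fin.last (l+1))) ≫ mapA A B u l m μ hμ a := by
  apply NatTrans.ext
  funext c
  refine ConcreteCategory.hom_ext _ _ fun x => ?_
  set φ : c.unop ⟶ ⦋l⦌ := SSet.stdSimplex.objEquiv x with hφ
  show ULift.up (normB A B l m (u a) (φ ≫ μ)) =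
    ULift.up (normA A B u l m μ hμ a (φ ≫ δ (Fin.last (l+1))))
  refine congrArg ULift.up ?_
  have hδ : ∀ v : Fin (l+1), (δ (Fin.last (l+1))).toOrderHom v = v.castSucc := by
    intro v
    exact Fin.succAbove_last_apply v
  have hnotop : ¬ TopHit l (φ ≫ δ (Fin.last (l+1))) := by
    intro hh
    have := hh
    rw [TopHit] at this
    have h2 : ((φ ≫ δ (Fin.last (l+1))).toOrderHom (Fin.last c.unop.len)) =
        (φ.toOrderHom (Fin.last c.unop.len)).castSucc := hδ _
    rw [h2] at this
    exact absurd this (Fin.castSucc_lt_last _).ne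
  by_cases h : NC φ
  · have h1 : NC (φ ≫ μ) := by
      intro hc
      apply h
      intro i
      exact hμ (hc i)
    have h2 : NC (φ ≫ δ (Fin.last (l+1))) := by
      intro hc
      apply h
      intro i
      have := hc i
      show φ.toOrderHom i = φ.toOrderHom 0
      apply Fin.castSucc_injective
      rw [← hδ, ← hδ]
      exact this
    have htr : trunc l m μ (φ ≫ δ (Fin.last (l+1))) hnotop = φ ≫ μ := by
      apply SimplexCategory.Hom.ext
      apply OrderHom.ext
      funext i
      show μ.toOrderHom _ = μ.toOrderHom _
      congr 1
      exact Fin.ext (by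
        simp only [Fin.coe_castPred]
        rw [show (φ ≫ δ (Fin.last (l+1))).toOrderHom i =
          (φ.toOrderHom i).castSucc from hδ _]
        rfl)
    rw [normB, dif_pos h1, normA, dif_pos h2, dif_neg hnotop]
    exact congrArg (fun t => Sum.inr (Sum.inl ((u a), t)))
      (Subtype.ext htr.symm)
  · have h1 : ¬ NC (φ ≫ μ) := by
      simp only [NC, not_not] at h ⊢
      intro i
      show μ.toOrderHom _ = μ.toOrderHom _
      rw [h i]
    have h2 : ¬ NC (φ ≫ δ (Fin.last (l+1))) := by
      simp only [NC, not_not] at h ⊢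
      intro i
      show (δ (Fin.last (l+1))).toOrderHom _ = (δ (Fin.last (l+1))).toOrderHom _
      rw [h i]
    have h0 : (φ ≫ δ (Fin.last (l+1))).toOrderHom 0 ≠ Fin.last (l+1) :=
      ne_top_of_not_top l _ hnotop 0
    rw [normB, dif_neg h1, normA, dif_neg h2, dif_neg h0]
    refine congrArg Sum.inl (congrArg Fin.castSucc (congrArg μ.toOrderHom ?_))
    exact Fin.ext (by
      simp only [Fin.coe_castPred]
      rw [show (φ ≫ δ (Fin.last (l+1))).toOrderHom 0 =
        (φ.toOrderHom 0).castSucc from hδ _]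
      rfl)

lemma wVB (hμ : Function.Injective μ.toOrderHom) (b : B) (i : Fin (m+1)) :
    stdVert m i ≫ mapB A B u l m μ hμ b = mapP A B u l m μ hμ i.castSucc := by
  apply NatTrans.ext
  funext c
  refine ConcreteCategory.hom_ext _ _ fun x => ?_
  show ULift.up (normB A B l m b ((SSet.stdSimplex.objEquiv x) ≫ const ⦋0⦌ ⦋m⦌ i)) =
    ULift.up (Sum.inl i.castSucc : EObj A B l m c.unop)
  refine congrArg ULift.up ?_
  have h : ¬ NC ((SSet.stdSimplex.objEquiv x) ≫ const ⦋0⦌ ⦋m⦌ i) := by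
    simp only [NC, not_not]
    intro j
    rfl
  rw [normB, dif_neg h]
  rfl

lemma wVA (hμ : Function.Injective μ.toOrderHom) (a : A) :
    stdVert (l+1) (Fin.last (l+1)) ≫ mapA A B u l m μ hμ a =
      mapP A B u l m μ hμ (Fin.last (m+1)) := by
  apply NatTrans.ext
  funext c
  refine ConcreteCategory.hom_ext _ _ fun x => ?_
  show ULift.up (normA A B u l m μ hμ a
      ((SSet.stdSimplex.objEquiv x) ≫ const ⦋0⦌ ⦋l+1⦌ (Fin.last (l+1)))) =
    ULift.up (Sum.inl (Fin.last (m+1)) : EObj A B l m c.unop)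
  refine congrArg ULift.up ?_
  have h : ¬ NC ((SSet.stdSimplex.objEquiv x) ≫ const ⦋0⦌ ⦋l+1⦌ (Fin.last (l+1))) := by
    simp only [NC, not_not]
    intro j
    rfl
  rw [normA, dif_neg h]
  exact dif_pos rfl

/-- The comparison map out of the amalgam `LL`. -/
noncomputable def PhiLL (hμ : Function.Injective μ.toOrderHom) :
    LL A B u l m μ ⟶ EF A B u l m μ hμ := by
  refine pushout.desc (Sigma.desc (fun b => mapB A B u l m μ hμ b))
    (Sigma.desc (fun a => mapA A B u l m μ hμ a)) ?_
  apply Sigma.hom_ext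
  intro a
  rw [toLB, toLA1]
  simp only [colimit.ι_desc_assoc, Discrete.functor_obj, Cofan.mk_pt, Cofan.mk_ι_app,
    Category.assoc, colimit.ι_desc, Sigma.ι_desc]
  exact wBA A B u l m μ hμ a

lemma inlLL_PhiLL (hμ : Function.Injective μ.toOrderHom) :
    pushout.inl (toLB A B u l m μ) (toLA1 A l) ≫ PhiLL A B u l m μ hμ =
      Sigma.desc (fun b => mapB A B u l m μ hμ b) := by
  rw [PhiLL]
  exact pushout.inl_desc _ _ _

lemma inrLL_PhiLL (hμ : Function.Injective μ.toOrderHom) :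
    pushout.inr (toLB A B u l m μ) (toLA1 A l) ≫ PhiLL A B u l m μ hμ =
      Sigma.desc (fun a => mapA A B u l m μ hμ a) := by
  rw [PhiLL]
  exact pushout.inr_desc _ _ _

/-- The comparison map from `C(μ,u)` to the simplicial set of normal forms. -/
noncomputable def Phi (hμ : Function.Injective μ.toOrderHom) :
    CC A B u l m μ ⟶ EF A B u l m μ hμ := by
  refine pushout.desc (PhiLL A B u l m μ hμ)
    (Sigma.desc (fun i => mapP A B u l m μ hμ i)) ?_
  apply Sigma.hom_ext
  rintro (⟨i, b⟩ | a)
  · rw [midToL, midToR]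
    simp only [colimit.ι_desc_assoc, Cofan.mk_pt, Cofan.mk_ι_app, Category.assoc,
      colimit.ι_desc, Sigma.ι_desc]
    exact (congrArg (stdVert m i ≫ Sigma.ι (fun _ : B => (Δ[m] : SSet)) b ≫ ·)
      (inlLL_PhiLL A B u l m μ hμ)).trans ((congrArg (stdVert m i ≫ ·)
      (Sigma.ι_desc (fun b => mapB A B u l m μ hμ b) b)).trans
      (wVB A B u l m μ hμ b i))
  · rw [midToL, midToR]
    simp only [colimit.ι_desc_assoc, Cofan.mk_pt, Cofan.mk_ι_app, Category.assoc,
      colimit.ι_desc, Sigma.ι_desc]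
    exact (congrArg (stdVert (l + 1) (Fin.last (l + 1)) ≫
      Sigma.ι (fun _ : A => (Δ[l+1] : SSet)) a ≫ ·) (inrLL_PhiLL A B u l m μ hμ)).trans
      ((congrArg (stdVert (l + 1) (Fin.last (l + 1)) ≫ ·)
        (Sigma.ι_desc (fun a => mapA A B u l m μ hμ a) a)).trans
      (wVA A B u l m μ hμ a))

lemma inl_Phi (hμ : Function.Injective μ.toOrderHom) :
    pushout.inl (midToL A B u l m μ) (midToR A B m) ≫ Phi A B u l m μ hμ =
      PhiLL A B u l m μ hμ := by
  rw [Phi]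
  exact pushout.inl_desc _ _ _

lemma inr_Phi (hμ : Function.Injective μ.toOrderHom) :
    pushout.inr (midToL A B u l m μ) (midToR A B m) ≫ Phi A B u l m μ hμ =
      Sigma.desc (fun i => mapP A B u l m μ hμ i) := by
  rw [Phi]
  exact pushout.inr_desc _ _ _

lemma charB_Phi (hμ : Function.Injective μ.toOrderHom) (b : B) :
    charB A B u l m μ b ≫ Phi A B u l m μ hμ = mapB A B u l m μ hμ b := by
  rw [charB]
  exact (congrArg (Sigma.ι (fun _ : B => (Δ[m] : SSet)) b ≫
    pushout.inl (toLB A B u l m μ) (toLA1 A l) ≫ ·) (inl_Phi A B u l m μ hμ)).trans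
    ((congrArg (Sigma.ι (fun _ : B => (Δ[m] : SSet)) b ≫ ·) (inlLL_PhiLL A B u l m μ hμ)).trans
      (Sigma.ι_desc _ _))

lemma charA_Phi (hμ : Function.Injective μ.toOrderHom) (a : A) :
    charA A B u l m μ a ≫ Phi A B u l m μ hμ = mapA A B u l m μ hμ a := by
  rw [charA]
  exact (congrArg (Sigma.ι (fun _ : A => (Δ[l+1] : SSet)) a ≫
    pushout.inr (toLB A B u l m μ) (toLA1 A l) ≫ ·) (inl_Phi A B u l m μ hμ)).trans
    ((congrArg (Sigma.ι (fun _ : A => (Δ[l+1] : SSet)) a ≫ ·) (inrLL_PhiLL A B u l m μ hμ)).trans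
      (Sigma.ι_desc _ _))

lemma charP_Phi (hμ : Function.Injective μ.toOrderHom) (i : Fin (m+2)) :
    charP A B u l m μ i ≫ Phi A B u l m μ hμ = mapP A B u l m μ hμ i := by
  rw [charP]
  exact (congrArg (Sigma.ι (fun _ : Fin (m + 2) => (Δ[0] : SSet)) i ≫ ·)
    (inr_Phi A B u l m μ hμ)).trans (Sigma.ι_desc _ _)

lemma Phi_simB (hμ : Function.Injective μ.toOrderHom) (b : B) {c : SimplexCategoryᵒᵖ}
    (α : c.unop ⟶ ⦋m⦌) :
    (Phi A B u l m μ hμ).app c (simB A B u l m μ b α) = ULift.up (normB A B l m b α) := by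
  have h := ConcreteCategory.congr_hom (NatTrans.congr_app (charB_Phi A B u l m μ hμ b) c)
    (SSet.stdSimplex.objEquiv.symm α)
  exact h.trans (congrArg (fun t => ULift.up (normB A B l m b t)) (Equiv.apply_symm_apply _ _))

lemma Phi_simA (hμ : Function.Injective μ.toOrderHom) (a : A) {c : SimplexCategoryᵒᵖ}
    (β : c.unop ⟶ ⦋l+1⦌) :
    (Phi A B u l m μ hμ).app c (simA A B u l m μ a β) =
      ULift.up (normA A B u l m μ hμ a β) := by
  have h := ConcreteCategory.congr_hom (NatTrans.congr_app (charA_Phi A B u l m μ hμ a) c)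
    (SSet.stdSimplex.objEquiv.symm β)
  exact h.trans (congrArg (fun t => ULift.up (normA A B u l m μ hμ a t))
    (Equiv.apply_symm_apply _ _))

lemma Phi_ptC (hμ : Function.Injective μ.toOrderHom) (i : Fin (m+2))
    (c : SimplexCategoryᵒᵖ) :
    (Phi A B u l m μ hμ).app c (ptC A B u l m μ i c) = ULift.up (Sum.inl i) := by
  exact ConcreteCategory.congr_hom (NatTrans.congr_app (charP_Phi A B u l m μ hμ i) c)
    (SSet.stdSimplex.objEquiv.symm (SimplexCategory.const c.unop ⦋0⦌ 0))

lemma ptC_inj (hμ : Function.Injective μ.toOrderHom) {i j : Fin (m+2)}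
    {c : SimplexCategoryᵒᵖ} (h : ptC A B u l m μ i c = ptC A B u l m μ j c) : i = j := by
  have h1 := Phi_ptC A B u l m μ hμ i c
  have h2 := Phi_ptC A B u l m μ hμ j c
  rw [h] at h1
  exact Sum.inl.inj (up_inj (h1.symm.trans h2))

end PhiSec
section Verts

open SimplexCategory

/-- The vertex of `C(μ,u)` corresponding to a vertex of `Δ[l+1]`. -/
def pv (v : Fin (l + 2)) : Fin (m + 2) :=
  if h : v = Fin.last (l+1) then Fin.last (m+1)
  else (μ.toOrderHom (v.castPred h)).castSucc

lemma pv_mono {v w : Fin (l + 2)} (hvw : v ≤ w) : pv l m μ v ≤ pv l m μ w := by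
  rw [pv, pv]
  by_cases hw : w = Fin.last (l+1)
  · rw [dif_pos hw]
    by_cases hv : v = Fin.last (l+1)
    · rw [dif_pos hv]
    · rw [dif_neg hv]
      exact Fin.le_last _
  · rw [dif_neg hw]
    have hv : v ≠ Fin.last (l+1) := by
      intro hh
      exact hw (le_antisymm (Fin.le_last _) (hh ▸ hvw))
    rw [dif_neg hv]
    exact Fin.castSucc_le_castSucc_iff.mpr
      (μ.toOrderHom.monotone (Fin.castPred_le_castPred_iff.mpr hvw))

lemma simB_const (b : B) {c : SimplexCategoryᵒᵖ} (v : Fin (m+1)) :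
    simB A B u l m μ b (SimplexCategory.const c.unop ⦋m⦌ v) =
      ptC A B u l m μ v.castSucc c := by
  have h : simB A B u l m μ b (SimplexCategory.const c.unop ⦋m⦌ v) =
      (stdVert m v ≫ charB A B u l m μ b).app c
        (SSet.stdSimplex.objEquiv.symm (SimplexCategory.const c.unop ⦋0⦌ 0)) := rfl
  rw [h, rel_vertB]
  rfl

lemma simA_const (a : A) {c : SimplexCategoryᵒᵖ} (v : Fin (l+2)) :
    simA A B u l m μ a (SimplexCategory.const c.unop ⦋l+1⦌ v) =
      ptC A B u l m μ (pv l m μ v) c := by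
  rw [pv]
  by_cases h : v = Fin.last (l+1)
  · rw [dif_pos h, h]
    have h2 : simA A B u l m μ a (SimplexCategory.const c.unop ⦋l+1⦌ (Fin.last (l+1))) =
        (stdVert (l+1) (Fin.last (l+1)) ≫ charA A B u l m μ a).app c
          (SSet.stdSimplex.objEquiv.symm (SimplexCategory.const c.unop ⦋0⦌ 0)) := rfl
    rw [h2, rel_vertA]
    rfl
  · rw [dif_neg h]
    have h2 : SimplexCategory.const c.unop ⦋l+1⦌ v =
        SimplexCategory.const c.unop ⦋l⦌ (v.castPred h) ≫ δ (Fin.last (l+1)) := by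
      apply SimplexCategory.Hom.ext
      apply OrderHom.ext
      funext i
      show v = (δ (Fin.last (l+1))).toOrderHom (v.castPred h)
      rw [show (δ (Fin.last (l+1))).toOrderHom (v.castPred h) = (v.castPred h).castSucc from
        Fin.succAbove_last_apply _, Fin.castSucc_castPred]
    rw [h2, ← rel_BA, SimplexCategory.const_comp]
    exact simB_const A B u l m μ (u a) _

/-- Lowering of a map avoiding the top vertex. -/
def lower {c : SimplexCategory} (β : c ⟶ ⦋l+1⦌) (h : ¬ TopHit l β) : c ⟶ ⦋l⦌ :=
  SimplexCategory.Hom.mk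
    { toFun := fun i => (β.toOrderHom i).castPred (ne_top_of_not_top l β h i)
      monotone' := fun i j hij =>
        Fin.castPred_le_castPred_iff.mpr (β.toOrderHom.monotone hij) }

lemma lower_delta {c : SimplexCategory} (β : c ⟶ ⦋l+1⦌) (h : ¬ TopHit l β) :
    lower l β h ≫ δ (Fin.last (l+1)) = β := by
  apply SimplexCategory.Hom.ext
  apply OrderHom.ext
  funext i
  show (δ (Fin.last (l+1))).toOrderHom ((lower l β h).toOrderHom i) = β.toOrderHom i
  rw [show (δ (Fin.last (l+1))).toOrderHom ((lower l β h).toOrderHom i) =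
    ((lower l β h).toOrderHom i).castSucc from Fin.succAbove_last_apply _]
  exact Fin.castSucc_castPred (β.toOrderHom i) (ne_top_of_not_top l β h i)

lemma lower_mu {c : SimplexCategory} (β : c ⟶ ⦋l+1⦌) (h : ¬ TopHit l β) :
    lower l β h ≫ μ = trunc l m μ β h := rfl

/-- A non-top `A`-simplex equals a `B`-simplex. -/
lemma simA_eq_simB (a : A) {c : SimplexCategoryᵒᵖ} (β : c.unop ⟶ ⦋l+1⦌)
    (ht : ¬ TopHit l β) :
    simA A B u l m μ a β = simB A B u l m μ (u a) (trunc l m μ β ht) := by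
  conv_lhs => rw [← lower_delta l β ht]
  rw [← rel_BA, lower_mu]

end Verts

section Deg

open SimplexCategory

lemma sigma_surj {n : ℕ} (i : Fin (n+1)) : Function.Surjective (σ i).toOrderHom := by
  intro y
  refine ⟨(δ i.castSucc).toOrderHom y, ?_⟩
  have h := SimplexCategory.δ_comp_σ_self (i := i)
  calc (σ i).toOrderHom ((δ i.castSucc).toOrderHom y)
      = (δ i.castSucc ≫ σ i).toOrderHom y := rfl
    _ = y := by rw [h]; rfl

lemma deg_ptC (i : Fin (m+2)) {n : ℕ} (hn : 0 < n) :
    IsDegenerate (CC A B u l m μ) (ptC A B u l m μ i (op (SimplexCategory.mk n))) := by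
  refine ⟨0, SimplexCategory.const ⦋n⦌ ⦋0⦌ 0, ptC A B u l m μ i (op (SimplexCategory.mk 0)),
    hn, fun y => ⟨0, @Subsingleton.elim (Fin 1) _ _ _⟩, ?_⟩
  exact map_ptC A B u l m μ _ i

lemma deg_simB {n : ℕ} (b : B) (α : SimplexCategory.mk (n+1) ⟶ ⦋m⦌)
    (h : ¬ Function.Injective α.toOrderHom) :
    IsDegenerate (CC A B u l m μ) (simB A B u l m μ b α) := by
  obtain ⟨i, α', hf⟩ := SimplexCategory.eq_σ_comp_of_not_injective α h
  refine ⟨n, σ i, simB A B u l m μ b α', n.lt_succ_self, sigma_surj i, ?_⟩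
  rw [show ((CC A B u l m μ).map (σ i).op (simB A B u l m μ b α') =
    simB A B u l m μ b (σ i ≫ α')) from map_simB A B u l m μ (σ i).op b α', ← hf]

lemma deg_simA {n : ℕ} (a : A) (β : SimplexCategory.mk (n+1) ⟶ ⦋l+1⦌)
    (h : ¬ Function.Injective β.toOrderHom) :
    IsDegenerate (CC A B u l m μ) (simA A B u l m μ a β) := by
  obtain ⟨i, β', hf⟩ := SimplexCategory.eq_σ_comp_of_not_injective β h
  refine ⟨n, σ i, simA A B u l m μ a β', n.lt_succ_self, sigma_surj i, ?_⟩
  rw [show ((CC A B u l m μ).map (σ i).op (simA A B u l m μ a β') =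
    simA A B u l m μ a (σ i ≫ β')) from map_simA A B u l m μ (σ i).op a β', ← hf]

lemma nc_of_inj {n k : ℕ} (α : SimplexCategory.mk (n+1) ⟶ ⦋k⦌)
    (h : Function.Injective α.toOrderHom) : NC α := by
  intro hc
  have h1 := h (hc 1)
  have : (1 : Fin (n+2)).val = (0 : Fin (n+2)).val := congrArg Fin.val h1
  simp at this

end Deg

section Faithful

open SimplexCategory

lemma normB_BB {c : SimplexCategory} {b b' : B} {α α' : c ⟶ ⦋m⦌} (hα : NC α)
    (h : normB A B l m b α = normB A B l m b' α') : b = b' ∧ α = α' := by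
  rw [normB, dif_pos hα, normB] at h
  by_cases hα' : NC α'
  · rw [dif_pos hα'] at h
    simp only [Sum.inr.injEq, Sum.inl.injEq, Prod.mk.injEq, Subtype.mk.injEq] at h
    exact h
  · rw [dif_neg hα'] at h
    exact nomatch h

lemma normB_faithful {c : SimplexCategory} (b : B) {α α' : c ⟶ ⦋m⦌}
    (h : normB A B l m b α = normB A B l m b α') : α = α' := by
  by_cases hα : NC α
  · exact (normB_BB A B l m hα h).2
  · by_cases hα' : NC α'
    · exact ((normB_BB A B l m hα' h.symm).2).symm
    · rw [normB, dif_neg hα, normB, dif_neg hα'] at h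
      simp only [Sum.inl.injEq] at h
      have h0 : α.toOrderHom 0 = α'.toOrderHom 0 := Fin.castSucc_injective _ h
      apply SimplexCategory.Hom.ext
      apply OrderHom.ext
      funext i
      simp only [NC, not_not] at hα hα'
      rw [hα i, hα' i, h0]

lemma normA_AA (hμ : Function.Injective μ.toOrderHom) {c : SimplexCategory}
    {a a' : A} {β β' : c ⟶ ⦋l+1⦌} (hβ : NC β) (ht : TopHit l β)
    (h : normA A B u l m μ hμ a β = normA A B u l m μ hμ a' β') : a = a' ∧ β = β' := by
  rw [normA, dif_pos hβ, dif_pos ht, normA] at h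
  by_cases hβ' : NC β'
  · rw [dif_pos hβ'] at h
    by_cases ht' : TopHit l β'
    · rw [dif_pos ht'] at h
      simp only [Sum.inr.injEq, Prod.mk.injEq, Subtype.mk.injEq] at h
      exact h
    · rw [dif_neg ht'] at h
      exact nomatch h
  · rw [dif_neg hβ'] at h
    by_cases h0 : β'.toOrderHom 0 = Fin.last (l+1)
    · rw [dif_pos h0] at h
      exact nomatch h
    · rw [dif_neg h0] at h
      exact nomatch h

lemma const_of_not_nc {c : SimplexCategory} {k : ℕ} {α : c ⟶ ⦋k⦌} (h : ¬ NC α) :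
    ∀ i, α.toOrderHom i = α.toOrderHom 0 := not_not.mp h

lemma normA_faithful (hμ : Function.Injective μ.toOrderHom) {c : SimplexCategory}
    (a : A) {β β' : c ⟶ ⦋l+1⦌}
    (h : normA A B u l m μ hμ a β = normA A B u l m μ hμ a β') : β = β' := by
  by_cases h1 : NC β
  · by_cases h1' : NC β'
    · by_cases h2 : TopHit l β
      · exact (normA_AA A B u l m μ hμ h1 h2 h).2
      · by_cases h2' : TopHit l β'
        · rw [normA, dif_pos h1, dif_neg h2, normA, dif_pos h1', dif_pos h2'] at h
          exact nomatch h
        · rw [normA, dif_pos h1, dif_neg h2, normA, dif_pos h1', dif_neg h2'] at h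
          simp only [Sum.inr.injEq, Sum.inl.injEq, Prod.mk.injEq, Subtype.mk.injEq] at h
          obtain ⟨-, htr⟩ := h
          apply SimplexCategory.Hom.ext
          apply OrderHom.ext
          funext i
          have hh := congrArg (fun f => SimplexCategory.Hom.toOrderHom f i) htr
          simp only at hh
          have h3 := hμ hh
          exact Fin.ext (by simpa using congrArg Fin.val h3)
    · by_cases h2 : TopHit l β
      · rw [normA, dif_pos h1, dif_pos h2, normA, dif_neg h1'] at h
        by_cases h0 : β'.toOrderHom 0 = Fin.last (l+1)
        · rw [dif_pos h0] at h
          exact nomatch h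
        · rw [dif_neg h0] at h
          exact nomatch h
      · rw [normA, dif_pos h1, dif_neg h2, normA, dif_neg h1'] at h
        by_cases h0 : β'.toOrderHom 0 = Fin.last (l+1)
        · rw [dif_pos h0] at h
          exact nomatch h
        · rw [dif_neg h0] at h
          exact nomatch h
  · by_cases h1' : NC β'
    · by_cases h2' : TopHit l β'
      · rw [normA, dif_neg h1, normA, dif_pos h1', dif_pos h2'] at h
        by_cases h0 : β.toOrderHom 0 = Fin.last (l+1)
        · rw [dif_pos h0] at h
          exact nomatch h
        · rw [dif_neg h0] at h
          exact nomatch h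
      · rw [normA, dif_neg h1, normA, dif_pos h1', dif_neg h2'] at h
        by_cases h0 : β.toOrderHom 0 = Fin.last (l+1)
        · rw [dif_pos h0] at h
          exact nomatch h
        · rw [dif_neg h0] at h
          exact nomatch h
    · -- both constant
      have hval : β.toOrderHom 0 = β'.toOrderHom 0 := by
        rw [normA, dif_neg h1, normA, dif_neg h1'] at h
        by_cases h0 : β.toOrderHom 0 = Fin.last (l+1)
        · by_cases h0' : β'.toOrderHom 0 = Fin.last (l+1)
          · rw [h0, h0']
          · rw [dif_pos h0, dif_neg h0'] at h
            simp only [Sum.inl.injEq] at h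
            exact absurd h.symm (Fin.castSucc_lt_last _).ne
        · by_cases h0' : β'.toOrderHom 0 = Fin.last (l+1)
          · rw [dif_neg h0, dif_pos h0'] at h
            simp only [Sum.inl.injEq] at h
            exact absurd h (Fin.castSucc_lt_last _).ne
          · rw [dif_neg h0, dif_neg h0'] at h
            simp only [Sum.inl.injEq] at h
            have h3 := hμ (Fin.castSucc_injective _ h)
            exact Fin.ext (by simpa using congrArg Fin.val h3)
      apply SimplexCategory.Hom.ext
      apply OrderHom.ext
      funext i
      rw [const_of_not_nc h1 i, const_of_not_nc h1' i, hval]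

end Faithful
section Rep

open SimplexCategory

lemma eval_jointly {J : Type} [SmallCategory J] (F : J ⥤ SSet) [HasColimit F]
    (c : SimplexCategoryᵒᵖ) (x : (colimit F).obj c) :
    ∃ j y, (colimit.ι F j).app c y = x := by
  obtain ⟨j, y, h⟩ := Types.jointly_surjective _
    (isColimitOfPreserves ((evaluation SimplexCategoryᵒᵖ (Type _)).obj c)
      (colimit.isColimit F)) x
  exact ⟨j, y, h⟩

lemma rep {c : SimplexCategoryᵒᵖ} (x : (CC A B u l m μ).obj c) :
    (∃ i, x = ptC A B u l m μ i c) ∨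
      (∃ (b : B) (α : c.unop ⟶ ⦋m⦌), x = simB A B u l m μ b α) ∨
      (∃ (a : A) (β : c.unop ⟶ ⦋l+1⦌), x = simA A B u l m μ a β) := by
  have hR : ∀ y : (∐ fun _ : Fin (m+2) => (Δ[0] : SSet)).obj c,
      ∃ i, (pushout.inr (midToL A B u l m μ) (midToR A B m)).app c y =
        ptC A B u l m μ i c := by
    intro y
    obtain ⟨⟨i⟩, z, hz⟩ :=
      eval_jointly (Discrete.functor (fun _ : Fin (m+2) => (Δ[0] : SSet))) c y
    refine ⟨i, ?_⟩
    rw [← hz]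
    have hz2 : z = SSet.stdSimplex.objEquiv.symm
        (SimplexCategory.const c.unop ⦋0⦌ 0) := by
      rw [← Equiv.symm_apply_apply SSet.stdSimplex.objEquiv z]
      exact congrArg _ (toZero_eq _ _)
    rw [hz2]
    rfl
  have hB : ∀ z : (∐ fun _ : B => (Δ[m] : SSet)).obj c,
      ∃ (b : B) (α : c.unop ⟶ ⦋m⦌),
        (pushout.inl (midToL A B u l m μ) (midToR A B m)).app c
          ((pushout.inl (toLB A B u l m μ) (toLA1 A l)).app c z) =
          simB A B u l m μ b α := by
    intro z
    obtain ⟨⟨b⟩, w, hw⟩ := eval_jointly (Discrete.functor (fun _ : B => (Δ[m] : SSet))) c z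
    refine ⟨b, SSet.stdSimplex.objEquiv w, ?_⟩
    rw [← hw]
    show _ = (charB A B u l m μ b).app c
      (SSet.stdSimplex.objEquiv.symm (SSet.stdSimplex.objEquiv w))
    rw [Equiv.symm_apply_apply]
    rfl
  have hA : ∀ z : (∐ fun _ : A => (Δ[l+1] : SSet)).obj c,
      ∃ (a : A) (β : c.unop ⟶ ⦋l+1⦌),
        (pushout.inl (midToL A B u l m μ) (midToR A B m)).app c
          ((pushout.inr (toLB A B u l m μ) (toLA1 A l)).app c z) =
          simA A B u l m μ a β := by
    intro z
    obtain ⟨⟨a⟩, w, hw⟩ :=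
      eval_jointly (Discrete.functor (fun _ : A => (Δ[l+1] : SSet))) c z
    refine ⟨a, SSet.stdSimplex.objEquiv w, ?_⟩
    rw [← hw]
    show _ = (charA A B u l m μ a).app c
      (SSet.stdSimplex.objEquiv.symm (SSet.stdSimplex.objEquiv w))
    rw [Equiv.symm_apply_apply]
    rfl
  obtain ⟨j, y, hy⟩ :=
    eval_jointly (span (midToL A B u l m μ) (midToR A B m)) c x
  cases j with
  | none =>
    left
    have hw := ConcreteCategory.congr_hom (NatTrans.congr_app
      (colimit.w (span (midToL A B u l m μ) (midToR A B m)) WalkingSpan.Hom.snd) c) y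
    obtain ⟨i, hi⟩ := hR ((midToR A B m).app c y)
    refine ⟨i, ?_⟩
    rw [← hy, ← hw]
    exact hi
  | some jj =>
    cases jj with
    | right =>
      left
      obtain ⟨i, hi⟩ := hR y
      refine ⟨i, ?_⟩
      rw [← hy]
      exact hi
    | left =>
      obtain ⟨j', z, hz⟩ := eval_jointly (span (toLB A B u l m μ) (toLA1 A l)) c y
      cases j' with
      | none =>
        right; right
        have hw2 := ConcreteCategory.congr_hom (NatTrans.congr_app
          (colimit.w (span (toLB A B u l m μ) (toLA1 A l)) WalkingSpan.Hom.snd) c) z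
        obtain ⟨a, β, ha⟩ := hA ((toLA1 A l).app c z)
        refine ⟨a, β, ?_⟩
        rw [← hy, ← hz, ← hw2]
        exact ha
      | some jj' =>
        cases jj' with
        | left =>
          right; left
          obtain ⟨b, α, hb⟩ := hB z
          refine ⟨b, α, ?_⟩
          rw [← hy, ← hz]
          exact hb
        | right =>
          right; right
          obtain ⟨a, β, ha⟩ := hA z
          refine ⟨a, β, ?_⟩
          rw [← hy, ← hz]
          exact ha

lemma vert_class (x : (CC A B u l m μ).obj (op (SimplexCategory.mk 0))) :
    ∃ i, x = ptC A B u l m μ i (op (SimplexCategory.mk 0)) := by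
  rcases rep A B u l m μ x with ⟨i, rfl⟩ | ⟨b, α, rfl⟩ | ⟨a, β, rfl⟩
  · exact ⟨i, rfl⟩
  · refine ⟨(α.toOrderHom 0).castSucc, ?_⟩
    rw [SimplexCategory.eq_const_of_zero α]
    exact simB_const A B u l m μ b _
  · refine ⟨pv l m μ (β.toOrderHom 0), ?_⟩
    rw [SimplexCategory.eq_const_of_zero β]
    exact simA_const A B u l m μ a _

end Rep

section Edges

open SimplexCategory

/-- The `j`-th spine edge of `Δ[n+1]`. -/
def edgeMap (n : ℕ) (j : Fin (n+1)) : (⦋1⦌ : SimplexCategory) ⟶ ⦋n+1⦌ :=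
  mkOfLe j.castSucc j.succ (Fin.castSucc_le_succ j)

lemma edgeMap_zero (n : ℕ) (j : Fin (n+1)) :
    (edgeMap n j).toOrderHom 0 = j.castSucc := rfl

lemma edgeMap_one (n : ℕ) (j : Fin (n+1)) :
    (edgeMap n j).toOrderHom 1 = j.succ := rfl

lemma edgeMap_window (n : ℕ) (j : Fin (n+1)) :
    ∃ jj : ℕ, ∀ i, jj ≤ ((edgeMap n j).toOrderHom i : ℕ) ∧
      ((edgeMap n j).toOrderHom i : ℕ) ≤ jj + 1 := by
  refine ⟨j.1, fun i => ?_⟩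
  match i with
  | 0 =>
    rw [edgeMap_zero]
    simp
  | 1 =>
    rw [edgeMap_one]
    simp

lemma ext_of_edges {n k : ℕ} (α α' : SimplexCategory.mk (n+1) ⟶ ⦋k⦌)
    (h : ∀ j : Fin (n+1), edgeMap n j ≫ α = edgeMap n j ≫ α') : α = α' := by
  apply SimplexCategory.Hom.ext
  apply OrderHom.ext
  funext i
  induction i using Fin.lastCases with
  | last =>
    have hh := congrArg (fun f => SimplexCategory.Hom.toOrderHom f 1) (h (Fin.last n))
    simp only at hh
    rw [show ((edgeMap n (Fin.last n) ≫ α).toOrderHom 1 = α.toOrderHom (Fin.last n).succ)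
      from rfl, show ((edgeMap n (Fin.last n) ≫ α').toOrderHom 1 =
        α'.toOrderHom (Fin.last n).succ) from rfl] at hh
    rw [Fin.succ_last] at hh
    exact hh
  | cast j =>
    have hh := congrArg (fun f => SimplexCategory.Hom.toOrderHom f 0) (h j)
    simp only at hh
    exact hh

lemma edge_le {i j : Fin (m+2)}
    (hμ : Function.Injective μ.toOrderHom)
    (h : EdgeRel (CC A B u l m μ) (ptC A B u l m μ i (op (SimplexCategory.mk 0)))
      (ptC A B u l m μ j (op (SimplexCategory.mk 0)))) : i ≤ j := by
  obtain ⟨e, h1, h0⟩ := h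
  rcases rep A B u l m μ e with ⟨k, rfl⟩ | ⟨b, α, rfl⟩ | ⟨a, β, rfl⟩
  · rw [map_ptC] at h1 h0
    rw [← ptC_inj A B u l m μ hμ h1, ← ptC_inj A B u l m μ hμ h0]
  · rw [show ((CC A B u l m μ).map (SimplexCategory.δ 1).op (simB A B u l m μ b α) =
      simB A B u l m μ b (SimplexCategory.δ 1 ≫ α)) from map_simB A B u l m μ _ b α] at h1
    rw [show ((CC A B u l m μ).map (SimplexCategory.δ 0).op (simB A B u l m μ b α) =
      simB A B u l m μ b (SimplexCategory.δ 0 ≫ α)) from map_simB A B u l m μ _ b α] at h0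
    rw [SimplexCategory.eq_const_of_zero (SimplexCategory.δ 1 ≫ α), simB_const] at h1
    rw [SimplexCategory.eq_const_of_zero (SimplexCategory.δ 0 ≫ α), simB_const] at h0
    have hi := ptC_inj A B u l m μ hμ h1
    have hj := ptC_inj A B u l m μ hμ h0
    rw [← hi, ← hj]
    have hv0 : (SimplexCategory.δ (1 : Fin 2) ≫ α).toOrderHom 0 = α.toOrderHom 0 := by
      show α.toOrderHom ((SimplexCategory.δ (1 : Fin 2)).toOrderHom 0) = α.toOrderHom 0
      congr 1
    have hv1 : (SimplexCategory.δ (0 : Fin 2) ≫ α).toOrderHom 0 = α.toOrderHom 1 := by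
      show α.toOrderHom ((SimplexCategory.δ (0 : Fin 2)).toOrderHom 0) = α.toOrderHom 1
      congr 1
    rw [hv0, hv1]
    exact Fin.castSucc_le_castSucc_iff.mpr (α.toOrderHom.monotone (by simp))
  · rw [show ((CC A B u l m μ).map (SimplexCategory.δ 1).op (simA A B u l m μ a β) =
      simA A B u l m μ a (SimplexCategory.δ 1 ≫ β)) from map_simA A B u l m μ _ a β] at h1
    rw [show ((CC A B u l m μ).map (SimplexCategory.δ 0).op (simA A B u l m μ a β) =
      simA A B u l m μ a (SimplexCategory.δ 0 ≫ β)) from map_simA A B u l m μ _ a β] at h0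
    rw [SimplexCategory.eq_const_of_zero (SimplexCategory.δ 1 ≫ β), simA_const] at h1
    rw [SimplexCategory.eq_const_of_zero (SimplexCategory.δ 0 ≫ β), simA_const] at h0
    have hi := ptC_inj A B u l m μ hμ h1
    have hj := ptC_inj A B u l m μ hμ h0
    rw [← hi, ← hj]
    have hv0 : (SimplexCategory.δ (1 : Fin 2) ≫ β).toOrderHom 0 = β.toOrderHom 0 := by
      show β.toOrderHom ((SimplexCategory.δ (1 : Fin 2)).toOrderHom 0) = β.toOrderHom 0
      congr 1
    have hv1 : (SimplexCategory.δ (0 : Fin 2) ≫ β).toOrderHom 0 = β.toOrderHom 1 := by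
      show β.toOrderHom ((SimplexCategory.δ (0 : Fin 2)).toOrderHom 0) = β.toOrderHom 1
      congr 1
    rw [hv0, hv1]
    exact pv_mono l m μ (β.toOrderHom.monotone (by simp))

lemma chain_le (hμ : Function.Injective μ.toOrderHom)
    {x y : (CC A B u l m μ).obj (op (SimplexCategory.mk 0))}
    (h : Relation.ReflTransGen (EdgeRel (CC A B u l m μ)) x y) :
    ∀ i j, x = ptC A B u l m μ i (op (SimplexCategory.mk 0)) →
      y = ptC A B u l m μ j (op (SimplexCategory.mk 0)) → i ≤ j := by
  induction h with
  | refl =>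
    intro i j hi hj
    rw [ptC_inj A B u l m μ hμ (hi ▸ hj : ptC A B u l m μ i _ = ptC A B u l m μ j _)]
  | @tail b yy hxb hby ih =>
    intro i j hi hj
    obtain ⟨k, hk⟩ := vert_class A B u l m μ b
    refine (ih i k hi hk).trans ?_
    exact edge_le A B u l m μ hμ (hk ▸ hj ▸ hby)

/-- Normal forms for non-degenerate simplices. -/
lemma nf {q : ℕ} (x : (CC A B u l m μ).obj (op (SimplexCategory.mk (q+1))))
    (hμ : Function.Injective μ.toOrderHom)
    (hx : ¬ IsDegenerate (CC A B u l m μ) x) :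
    (∃ (b : B) (α : SimplexCategory.mk (q+1) ⟶ ⦋m⦌),
      Function.Injective α.toOrderHom ∧ x = simB A B u l m μ b α) ∨
    (∃ (a : A) (β : SimplexCategory.mk (q+1) ⟶ ⦋l+1⦌),
      Function.Injective β.toOrderHom ∧ TopHit l β ∧ x = simA A B u l m μ a β) := by
  rcases rep A B u l m μ x with ⟨i, rfl⟩ | ⟨b, α, rfl⟩ | ⟨a, β, rfl⟩
  · exact absurd (deg_ptC A B u l m μ i q.succ_pos) hx
  · left
    refine ⟨b, α, ?_, rfl⟩
    by_contra hni
    exact hx (deg_simB A B u l m μ b α hni)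
  · have hβi : Function.Injective β.toOrderHom := by
      by_contra hni
      exact hx (deg_simA A B u l m μ a β hni)
    by_cases ht : TopHit l β
    · right
      exact ⟨a, β, hβi, ht, rfl⟩
    · left
      refine ⟨u a, trunc l m μ β ht, ?_, simA_eq_simB A B u l m μ a β ht⟩
      intro i j hij
      apply hβi
      have h2 := hμ hij
      have h3 := congrArg Fin.val h2
      simp only [Fin.coe_castPred] at h3
      exact Fin.ext h3

end Edges
section Main

open SimplexCategory

lemma edge_nc {n k : ℕ} (α : SimplexCategory.mk (n+1) ⟶ ⦋k⦌)
    (h : Function.Injective α.toOrderHom) (j : Fin (n+1)) :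
    NC (edgeMap n j ≫ α) := by
  intro hc
  have h2 := h (hc 1)
  exact (Fin.castSucc_lt_succ (i := j)).ne' h2

lemma edge_top {n : ℕ} (β : SimplexCategory.mk (n+1) ⟶ ⦋l+1⦌) (ht : TopHit l β) :
    TopHit l (edgeMap n (Fin.last n) ≫ β) := by
  show β.toOrderHom ((edgeMap n (Fin.last n)).toOrderHom (Fin.last 1)) = Fin.last (l+1)
  rw [show (edgeMap n (Fin.last n)).toOrderHom (Fin.last 1) = (Fin.last n).succ from rfl,
    Fin.succ_last]
  exact ht

end Main
/-- If the function `u : A → B` is injective, then the simplicial set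
`C(μ,u)` is `1`-ordered. -/
theorem statement_4 (hμ : Function.Injective μ.toOrderHom)
    (hu : Function.Injective u) :
    Is1Ordered (CC A B u l m μ) := by
  refine ⟨?_, ?_, ?_⟩
  · -- antisymmetry
    intro x y hxy hyx
    obtain ⟨i, rfl⟩ := vert_class A B u l m μ x
    obtain ⟨j, rfl⟩ := vert_class A B u l m μ y
    have h1 := chain_le A B u l m μ hμ hxy i j rfl rfl
    have h2 := chain_le A B u l m μ hμ hyx j i rfl rfl
    rw [le_antisymm h1 h2]
  · -- mono on spines
    intro q hq x hx
    obtain ⟨q', rfl⟩ : ∃ q', q = q' + 1 := ⟨q - 1, (Nat.succ_pred_eq_of_pos hq).symm⟩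
    rw [NatTrans.mono_iff_mono_app]
    intro c
    rw [CategoryTheory.mono_iff_injective]
    intro σ σ' hss
    rcases nf A B u l m μ x hμ hx with ⟨b, α, hαi, rfl⟩ | ⟨a, β, hβi, hβt, rfl⟩
    · have h' : (CC A B u l m μ).map σ.1.op (simB A B u l m μ b α) =
        (CC A B u l m μ).map σ'.1.op (simB A B u l m μ b α) := hss
      have h'' := (map_simB A B u l m μ σ.1.op b α).symm.trans
        (h'.trans (map_simB A B u l m μ σ'.1.op b α))
      have e1 := Phi_simB A B u l m μ hμ b (σ.1.op.unop ≫ α)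
      have e2 := Phi_simB A B u l m μ hμ b (σ'.1.op.unop ≫ α)
      rw [h''] at e1
      have h3 := normB_faithful A B l m b (up_inj (e1.symm.trans e2))
      apply Subtype.ext
      apply SimplexCategory.Hom.ext
      apply OrderHom.ext
      funext i
      exact hαi (congrArg (fun f => SimplexCategory.Hom.toOrderHom f i) h3)
    · have h' : (CC A B u l m μ).map σ.1.op (simA A B u l m μ a β) =
        (CC A B u l m μ).map σ'.1.op (simA A B u l m μ a β) := hss
      have h'' := (map_simA A B u l m μ σ.1.op a β).symm.trans
        (h'.trans (map_simA A B u l m μ σ'.1.op a β))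
      have e1 := Phi_simA A B u l m μ hμ a (σ.1.op.unop ≫ β)
      have e2 := Phi_simA A B u l m μ hμ a (σ'.1.op.unop ≫ β)
      rw [h''] at e1
      have h3 := normA_faithful A B u l m μ hμ a (up_inj (e1.symm.trans e2))
      apply Subtype.ext
      apply SimplexCategory.Hom.ext
      apply OrderHom.ext
      funext i
      exact hβi (congrArg (fun f => SimplexCategory.Hom.toOrderHom f i) h3)
  · -- spine determines nondegenerate simplices
    intro q hq x y hx hy hsp
    obtain ⟨q', rfl⟩ : ∃ q', q = q' + 1 := ⟨q - 1, (Nat.succ_pred_eq_of_pos hq).symm⟩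
    have edge : ∀ j : Fin (q'+1),
        (CC A B u l m μ).map (edgeMap q' j).op x =
          (CC A B u l m μ).map (edgeMap q' j).op y := by
      intro j
      exact ConcreteCategory.congr_hom (NatTrans.congr_app hsp (op (SimplexCategory.mk 1)))
        ⟨edgeMap q' j, edgeMap_window q' j⟩
    rcases nf A B u l m μ x hμ hx with ⟨b, α, hαi, rfl⟩ | ⟨a, β, hβi, hβt, rfl⟩ <;>
      rcases nf A B u l m μ y hμ hy with ⟨b', α', hαi', rfl⟩ | ⟨a', β', hβi', hβt', rfl⟩
    · -- B/B
      have key : ∀ j : Fin (q'+1), b = b' ∧ edgeMap q' j ≫ α = edgeMap q' j ≫ α' := by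
        intro j
        have he := edge j
        have he' := (map_simB A B u l m μ (edgeMap q' j).op b α).symm.trans
          (he.trans (map_simB A B u l m μ (edgeMap q' j).op b' α'))
        have e1 := Phi_simB A B u l m μ hμ b ((edgeMap q' j).op.unop ≫ α)
        have e2 := Phi_simB A B u l m μ hμ b' ((edgeMap q' j).op.unop ≫ α')
        rw [he'] at e1
        exact normB_BB A B l m (edge_nc α hαi j) (up_inj (e1.symm.trans e2))
      have hb : b = b' := (key 0).1
      have hα : α = α' := ext_of_edges α α' (fun j => (key j).2)
      rw [hb, hα]
    · -- B/A : impossible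
      exfalso
      have he := edge (Fin.last q')
      have he' := (map_simB A B u l m μ (edgeMap q' (Fin.last q')).op b α).symm.trans
        (he.trans (map_simA A B u l m μ (edgeMap q' (Fin.last q')).op a' β'))
      have e1 := Phi_simB A B u l m μ hμ b ((edgeMap q' (Fin.last q')).op.unop ≫ α)
      have e2 := Phi_simA A B u l m μ hμ a' ((edgeMap q' (Fin.last q')).op.unop ≫ β')
      rw [he'] at e1
      have h3 := up_inj (e1.symm.trans e2)
      have hnc1 : NC ((edgeMap q' (Fin.last q')).op.unop ≫ α) := edge_nc α hαi _
      have hnc2 : NC ((edgeMap q' (Fin.last q')).op.unop ≫ β') := edge_nc β' hβi' _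
      have hnt2 : TopHit l ((edgeMap q' (Fin.last q')).op.unop ≫ β') := edge_top l β' hβt'
      rw [normB, dif_pos hnc1, normA, dif_pos hnc2, dif_pos hnt2] at h3
      exact nomatch h3
    · -- A/B : impossible
      exfalso
      have he := edge (Fin.last q')
      have he' := (map_simA A B u l m μ (edgeMap q' (Fin.last q')).op a β).symm.trans
        (he.trans (map_simB A B u l m μ (edgeMap q' (Fin.last q')).op b' α'))
      have e1 := Phi_simA A B u l m μ hμ a ((edgeMap q' (Fin.last q')).op.unop ≫ β)
      have e2 := Phi_simB A B u l m μ hμ b' ((edgeMap q' (Fin.last q')).op.unop ≫ α')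
      rw [he'] at e1
      have h3 := up_inj (e1.symm.trans e2)
      have hnc1 : NC ((edgeMap q' (Fin.last q')).op.unop ≫ β) := edge_nc β hβi _
      have hnt1 : TopHit l ((edgeMap q' (Fin.last q')).op.unop ≫ β) := edge_top l β hβt
      have hnc2 : NC ((edgeMap q' (Fin.last q')).op.unop ≫ α') := edge_nc α' hαi' _
      rw [normA, dif_pos hnc1, dif_pos hnt1, normB, dif_pos hnc2] at h3
      exact nomatch h3
    · -- A/A
      have keylast : a = a' ∧ edgeMap q' (Fin.last q') ≫ β =
          edgeMap q' (Fin.last q') ≫ β' := by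
        have he := edge (Fin.last q')
        have he' := (map_simA A B u l m μ (edgeMap q' (Fin.last q')).op a β).symm.trans
          (he.trans (map_simA A B u l m μ (edgeMap q' (Fin.last q')).op a' β'))
        have e1 := Phi_simA A B u l m μ hμ a ((edgeMap q' (Fin.last q')).op.unop ≫ β)
        have e2 := Phi_simA A B u l m μ hμ a' ((edgeMap q' (Fin.last q')).op.unop ≫ β')
        rw [he'] at e1
        exact normA_AA A B u l m μ hμ (edge_nc β hβi (Fin.last q')) (edge_top l β hβt)
          (up_inj (e1.symm.trans e2))
      obtain ⟨rfl, -⟩ := keylast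
      have hβ : β = β' := by
        apply ext_of_edges
        intro j
        have he := edge j
        have he' := (map_simA A B u l m μ (edgeMap q' j).op a β).symm.trans
          (he.trans (map_simA A B u l m μ (edgeMap q' j).op a β'))
        have e1 := Phi_simA A B u l m μ hμ a ((edgeMap q' j).op.unop ≫ β)
        have e2 := Phi_simA A B u l m μ hμ a ((edgeMap q' j).op.unop ≫ β')
        rw [he'] at e1
        exact normA_faithful A B u l m μ hμ a (up_inj (e1.symm.trans e2))
      rw [hβ]

end Cone
end Paper
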